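/- Let m and n be positive integers and let S ⊆ [m]×[n]. The set of points {(e_i, e_j) : (i,j) ∈ S} is affinely independent in ℝ^m×ℝ^n if and only if the bipartite graph on vertex set [m] ⊔ [n] with edge set S contains no cycle. -/

import Mathlib

/-- The point `(e_i, e_j)` of `Δ_{m-1} × Δ_{n-1} ⊆ ℝ^m × ℝ^n`. -/
noncomputable def vtx (m n : ℕ) (p : Fin m × Fin n) : (Fin m → ℝ) × (Fin n → ℝ) :=
  (Pi.single p.1 1, Pi.single p.2 1)

/-- The bipartite graph on `[m] ⊔ [n]` with edge set `S`. -/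
def bipGraph (m n : ℕ) (S : Finset (Fin m × Fin n)) : SimpleGraph (Fin m ⊕ Fin n) where
  Adj u v := (∃ p ∈ S, u = Sum.inl p.1 ∧ v = Sum.inr p.2) ∨
             (∃ p ∈ S, u = Sum.inr p.2 ∧ v = Sum.inl p.1)
  symm := by
    refine ⟨?_⟩
    rintro u v (⟨p, hp, rfl, rfl⟩ | ⟨p, hp, rfl, rfl⟩)
    · exact Or.inr ⟨p, hp, rfl, rfl⟩
    · exact Or.inl ⟨p, hp, rfl, rfl⟩
  loopless := by
    refine ⟨?_⟩
    rintro u (⟨p, hp, h1, h2⟩ | ⟨p, hp, h1, h2⟩) <;> simp_all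

open SimpleGraph

/-! ### Auxiliary definitions for the cycle → dependence direction -/

/-- Sign contribution of a dart `d` to the edge `q`. -/
noncomputable def dpDS {m n : ℕ} {S : Finset (Fin m × Fin n)} (d : (bipGraph m n S).Dart)
    (q : Fin m × Fin n) : ℝ :=
  if d.toProd = (Sum.inl q.1, Sum.inr q.2) then 1
  else if d.toProd = (Sum.inr q.2, Sum.inl q.1) then -1 else 0

/-- The signed vertex-incidence vector of a dart. -/
noncomputable def dpF {m n : ℕ} {S : Finset (Fin m × Fin n)} (d : (bipGraph m n S).Dart) :
    (Fin m → ℝ) × (Fin n → ℝ) :=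
  (fun i => (if d.fst = Sum.inl i then (1:ℝ) else 0) - (if d.snd = Sum.inl i then 1 else 0),
   fun j => (if d.snd = Sum.inr j then (1:ℝ) else 0) - (if d.fst = Sum.inr j then 1 else 0))

/-- The weight of `q`, summed over a list of darts. -/
noncomputable def dpW {m n : ℕ} {S : Finset (Fin m × Fin n)}
    (l : List ((bipGraph m n S).Dart)) (q : Fin m × Fin n) : ℝ :=
  (l.map (fun d => dpDS d q)).sum

lemma dp_flux {V : Type*} [DecidableEq V] {G : SimpleGraph V} {u v : V} (p : G.Walk u v)
    (x : V) :
    ((p.darts.map (fun d => (if d.fst = x then (1:ℝ) else 0)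
        - (if d.snd = x then (1:ℝ) else 0))).sum)
      = (if u = x then (1:ℝ) else 0) - (if v = x then 1 else 0) := by
  induction p with
  | nil => simp
  | cons h q ih =>
    simp only [Walk.darts_cons, List.map_cons, List.sum_cons, ih]
    ring

lemma dp_list_sum_finset_sum {α β M : Type*} [AddCommMonoid M] (l : List α) (t : Finset β)
    (f : α → β → M) :
    ∑ b ∈ t, (l.map (fun a => f a b)).sum = (l.map (fun a => ∑ b ∈ t, f a b)).sum := by
  induction l with
  | nil => simp
  | cons a l ih => simp [Finset.sum_add_distrib, ih]

lemma dp_list_sum_eq_single {α M : Type*} [AddCommMonoid M] {l : List α} (hl : l.Nodup)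
    {a0 : α} (h0 : a0 ∈ l) (f : α → M) (hf : ∀ a ∈ l, a ≠ a0 → f a = 0) :
    (l.map f).sum = f a0 := by
  induction l with
  | nil => simp at h0
  | cons a l ih =>
    rcases List.mem_cons.mp h0 with rfl | h0
    · have hz : (l.map f).sum = 0 := by
        apply List.sum_eq_zero; intro x hx
        rcases List.mem_map.mp hx with ⟨b, hb, rfl⟩
        exact hf b (List.mem_cons_of_mem _ hb)
          (fun h => (List.nodup_cons.mp hl).1 (h ▸ hb))
      simp [hz]
    · have ha : a ≠ a0 := fun h => (List.nodup_cons.mp hl).1 (h ▸ h0)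
      have := ih (List.nodup_cons.mp hl).2 h0
        (fun b hb hb' => hf b (List.mem_cons_of_mem _ hb) hb')
      simp [this, hf a List.mem_cons_self ha]

lemma dp_list_sum_smul {α M : Type*} [AddCommMonoid M] [Module ℝ M] (l : List α)
    (f : α → ℝ) (x : M) : (l.map f).sum • x = (l.map (fun a => f a • x)).sum := by
  induction l with
  | nil => simp
  | cons a l ih => simp [add_smul, ih]

lemma dp_prod_pi_sum {α : Type*} {m n : ℕ} (l : List α)
    (F : α → (Fin m → ℝ) × (Fin n → ℝ)) :
    (l.map F).sum = (fun i => (l.map fun a => (F a).1 i).sum,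
      fun j => (l.map fun a => (F a).2 j).sum) := by
  induction l with
  | nil =>
    refine Prod.ext (funext fun i => ?_) (funext fun j => ?_) <;> simp <;> rfl
  | cons a l ih =>
    simp only [List.map_cons, List.sum_cons, ih]
    refine Prod.ext (funext fun i => ?_) (funext fun j => ?_) <;> simp [Prod.fst_add] <;> rfl

/-- Each dart of the bipartite graph corresponds to a unique edge of `S`. -/
lemma dp_res {m n : ℕ} {S : Finset (Fin m × Fin n)} (d : (bipGraph m n S).Dart) :
    ∃ q ∈ S, d.toProd = (Sum.inl q.1, Sum.inr q.2) ∨ d.toProd = (Sum.inr q.2, Sum.inl q.1) := by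
  rcases d.adj with ⟨p, hp, h1, h2⟩ | ⟨p, hp, h1, h2⟩
  · exact ⟨p, hp, Or.inl (Prod.ext h1 h2)⟩
  · exact ⟨p, hp, Or.inr (Prod.ext h1 h2)⟩

lemma dp_claimA {m n : ℕ} {S : Finset (Fin m × Fin n)} (d : (bipGraph m n S).Dart) :
    ∑ q ∈ (Finset.univ : Finset {x // x ∈ S}), dpDS d ↑q • vtx m n ↑q = dpF d := by
  classical
  rcases d.adj with ⟨p, hp, h1, h2⟩ | ⟨p, hp, h1, h2⟩
  · have ht : d.toProd = (Sum.inl p.1, Sum.inr p.2) := Prod.ext h1 h2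
    have hds' : ∀ q : {x // x ∈ S},
        dpDS d ↑q = if (q : Fin m × Fin n) = p then 1 else 0 := by
      intro q
      by_cases hq : (q : Fin m × Fin n) = p
      · rw [if_pos hq, dpDS]
        simp [ht, hq]
      · rw [if_neg hq, dpDS]
        rw [if_neg, if_neg]
        · rw [ht]
          intro h
          simp [Prod.ext_iff] at h
        · rw [ht]
          intro h
          apply hq
          simp [Prod.ext_iff] at h
          exact Prod.ext h.1.symm h.2.symm
    rw [Finset.sum_congr rfl (fun q _ => by rw [hds' q])]
    have hsum : ∑ q ∈ (Finset.univ : Finset {x // x ∈ S}),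
        (if (q : Fin m × Fin n) = p then (1:ℝ) else 0) • vtx m n ↑q = vtx m n p := by
      rw [Finset.sum_eq_single_of_mem (⟨p, hp⟩ : {x // x ∈ S}) (Finset.mem_univ _)]
      · simp
      · intro q _ hq
        rw [if_neg, zero_smul]
        exact fun h => hq (Subtype.ext h)
    rw [hsum, dpF]
    refine Prod.ext (funext fun i => ?_) (funext fun j => ?_)
    · have e1 : d.fst = Sum.inl p.1 := h1
      have e2 : d.snd = Sum.inr p.2 := h2
      simp [vtx, e1, e2, Pi.single_apply, eq_comm]
    · have e1 : d.fst = Sum.inl p.1 := h1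
      have e2 : d.snd = Sum.inr p.2 := h2
      simp [vtx, e1, e2, Pi.single_apply, eq_comm]
  · have ht : d.toProd = (Sum.inr p.2, Sum.inl p.1) := Prod.ext h1 h2
    have hds' : ∀ q : {x // x ∈ S},
        dpDS d ↑q = if (q : Fin m × Fin n) = p then -1 else 0 := by
      intro q
      by_cases hq : (q : Fin m × Fin n) = p
      · rw [if_pos hq, dpDS]
        rw [if_neg, if_pos]
        · rw [ht, hq]
        · rw [ht, hq]
          intro h
          simp [Prod.ext_iff] at h
      · rw [if_neg hq, dpDS]
        rw [if_neg, if_neg]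
        · rw [ht]
          intro h
          apply hq
          simp [Prod.ext_iff] at h
          exact Prod.ext h.2.symm h.1.symm
        · rw [ht]
          intro h
          simp [Prod.ext_iff] at h
    rw [Finset.sum_congr rfl (fun q _ => by rw [hds' q])]
    have hsum : ∑ q ∈ (Finset.univ : Finset {x // x ∈ S}),
        (if (q : Fin m × Fin n) = p then (-1:ℝ) else 0) • vtx m n ↑q = -vtx m n p := by
      rw [Finset.sum_eq_single_of_mem (⟨p, hp⟩ : {x // x ∈ S}) (Finset.mem_univ _)]
      · simp
      · intro q _ hq
        rw [if_neg, zero_smul]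
        exact fun h => hq (Subtype.ext h)
    rw [hsum, dpF]
    refine Prod.ext (funext fun i => ?_) (funext fun j => ?_)
    · have e1 : d.fst = Sum.inr p.2 := h1
      have e2 : d.snd = Sum.inl p.1 := h2
      simp [vtx, e1, e2, Pi.single_apply, eq_comm]
    · have e1 : d.fst = Sum.inr p.2 := h1
      have e2 : d.snd = Sum.inl p.1 := h2
      simp [vtx, e1, e2, Pi.single_apply, eq_comm]

lemma dp_claimB {m n : ℕ} {S : Finset (Fin m × Fin n)} {v : Fin m ⊕ Fin n}
    (c : (bipGraph m n S).Walk v v) : (c.darts.map dpF).sum = 0 := by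
  classical
  rw [dp_prod_pi_sum]
  refine Prod.ext (funext fun i => ?_) (funext fun j => ?_)
  · show (c.darts.map fun d => (dpF d).1 i).sum = 0
    have heq : (c.darts.map fun d => (dpF d).1 i)
        = c.darts.map (fun d => (if d.fst = Sum.inl i then (1:ℝ) else 0)
            - (if d.snd = Sum.inl i then (1:ℝ) else 0)) := by
      apply List.map_congr_left
      intro d _
      rfl
    rw [heq, dp_flux c (Sum.inl i), sub_self]
  · show (c.darts.map fun d => (dpF d).2 j).sum = 0
    have heq : (c.darts.map fun d => (dpF d).2 j)
        = c.darts.map (fun d => -((if d.fst = Sum.inr j then (1:ℝ) else 0)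
            - (if d.snd = Sum.inr j then (1:ℝ) else 0))) := by
      apply List.map_congr_left
      intro d _
      show (if d.snd = Sum.inr j then (1:ℝ) else 0) - (if d.fst = Sum.inr j then 1 else 0) = _
      ring
    rw [heq]
    have : (c.darts.map (fun d => -((if d.fst = Sum.inr j then (1:ℝ) else 0)
        - (if d.snd = Sum.inr j then (1:ℝ) else 0)))).sum
        = -(c.darts.map (fun d => (if d.fst = Sum.inr j then (1:ℝ) else 0)
            - (if d.snd = Sum.inr j then (1:ℝ) else 0))).sum := by
      induction c.darts with
      | nil => simp
      | cons a l ih => simp only [List.map_cons, List.sum_cons, ih]; ring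
    rw [this, dp_flux c (Sum.inr j), sub_self, neg_zero]

/-- The points `{(e_i, e_j) : (i,j) ∈ S}` are affinely independent iff the
bipartite graph on `[m] ⊔ [n]` with edge set `S` contains no cycle. -/
theorem dyckpaths_stmt0 (m n : ℕ) (hm : 0 < m) (hn : 0 < n)
    (S : Finset (Fin m × Fin n)) :
    AffineIndependent ℝ (fun p : S => vtx m n (p : Fin m × Fin n)) ↔
      (bipGraph m n S).IsAcyclic := by
  classical
  constructor
  · -- independent → acyclic
    intro hind v c hc
    rw [affineIndependent_iff] at hind
    have hwv : ∑ q ∈ (Finset.univ : Finset {x // x ∈ S}),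
        dpW c.darts ↑q • vtx m n ↑q = 0 := by
      calc ∑ q ∈ (Finset.univ : Finset {x // x ∈ S}), dpW c.darts ↑q • vtx m n ↑q
          = ∑ q ∈ (Finset.univ : Finset {x // x ∈ S}),
              (c.darts.map (fun d => dpDS d ↑q • vtx m n ↑q)).sum :=
            Finset.sum_congr rfl fun q _ => dp_list_sum_smul _ _ _
        _ = (c.darts.map (fun d => ∑ q ∈ (Finset.univ : Finset {x // x ∈ S}),
              dpDS d ↑q • vtx m n ↑q)).sum := dp_list_sum_finset_sum _ _ _
        _ = (c.darts.map dpF).sum := by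
            congr 1; exact List.map_congr_left fun d _ => dp_claimA d
        _ = 0 := dp_claimB c
    have hw : ∑ q ∈ (Finset.univ : Finset {x // x ∈ S}), dpW c.darts ↑q = 0 := by
      have h1 := congrArg Prod.fst hwv
      have h2 : ∀ i : Fin m, ∑ q ∈ (Finset.univ : Finset {x // x ∈ S}),
          dpW c.darts ↑q * (Pi.single ((q : Fin m × Fin n)).1 (1:ℝ) : Fin m → ℝ) i = 0 := by
        intro i
        have h3 := congrFun h1 i
        simpa [Prod.fst_sum, Finset.sum_apply, vtx] using h3
      calc ∑ q ∈ (Finset.univ : Finset {x // x ∈ S}), dpW c.darts ↑q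
          = ∑ q ∈ (Finset.univ : Finset {x // x ∈ S}),
              ∑ i, dpW c.darts ↑q * (Pi.single ((q : Fin m × Fin n)).1 (1:ℝ) : Fin m → ℝ) i := by
            refine Finset.sum_congr rfl fun q _ => ?_
            rw [← Finset.mul_sum]
            simp [Pi.single_apply]
        _ = ∑ i, ∑ q ∈ (Finset.univ : Finset {x // x ∈ S}),
              dpW c.darts ↑q * (Pi.single ((q : Fin m × Fin n)).1 (1:ℝ) : Fin m → ℝ) i :=
            Finset.sum_comm
        _ = 0 := by
            refine Finset.sum_eq_zero fun i _ => h2 i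
    have hne : c.darts ≠ [] := by
      intro h
      have h3 := hc.three_le_length
      have h4 : c.darts.length = c.length := Walk.length_darts c
      rw [h] at h4
      simp at h4
      omega
    obtain ⟨d0, hd0⟩ := List.exists_mem_of_ne_nil _ hne
    obtain ⟨q0, hq0S, hq0⟩ := dp_res d0
    have hedge : c.darts.map SimpleGraph.Dart.edge = c.edges := rfl
    have hnodupE : c.edges.Nodup := hc.isTrail.edges_nodup
    have hnodupD : c.darts.Nodup := by
      have := hnodupE
      rw [← hedge] at this
      exact this.of_map
    have hinj := List.inj_on_of_nodup_map (f := SimpleGraph.Dart.edge) (l := c.darts)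
      (by rw [hedge]; exact hnodupE)
    have key : dpW c.darts q0 = dpDS d0 q0 := by
      refine dp_list_sum_eq_single hnodupD hd0 _ ?_
      intro d hd hdne
      have hA : d.toProd ≠ (Sum.inl q0.1, Sum.inr q0.2) := by
        intro hdA
        rcases hq0 with h0 | h0
        · exact hdne (SimpleGraph.Dart.ext _ _ (hdA.trans h0.symm))
        · apply hdne
          apply hinj hd hd0
          rw [SimpleGraph.dart_edge_eq_mk'_iff.mpr (Or.inl hdA),
            SimpleGraph.dart_edge_eq_mk'_iff.mpr (Or.inl h0)]
          exact Sym2.eq_swap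
      have hB : d.toProd ≠ (Sum.inr q0.2, Sum.inl q0.1) := by
        intro hdB
        rcases hq0 with h0 | h0
        · apply hdne
          apply hinj hd hd0
          rw [SimpleGraph.dart_edge_eq_mk'_iff.mpr (Or.inl hdB),
            SimpleGraph.dart_edge_eq_mk'_iff.mpr (Or.inl h0)]
          exact Sym2.eq_swap.symm
        · exact hdne (SimpleGraph.Dart.ext _ _ (hdB.trans h0.symm))
      rw [dpDS, if_neg hA, if_neg hB]
    have hds0 : dpDS d0 q0 ≠ 0 := by
      rcases hq0 with h0 | h0
      · rw [dpDS, if_pos h0]; norm_num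
      · rw [dpDS, if_neg, if_pos h0]
        · norm_num
        · rw [h0]
          intro h
          rw [Prod.ext_iff] at h
          exact Sum.inr_ne_inl h.1
    have := hind Finset.univ (fun q => dpW c.darts ↑q) hw hwv ⟨q0, hq0S⟩ (Finset.mem_univ _)
    exact hds0 (key.symm.trans this)
  · -- acyclic → independent
    intro hA
    rw [affineIndependent_iff]
    intro s w hw hwv p0 hp0
    have hadj : (bipGraph m n S).Adj (Sum.inl (p0 : Fin m × Fin n).1)
        (Sum.inr (p0 : Fin m × Fin n).2) := Or.inl ⟨↑p0, p0.2, rfl, rfl⟩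
    have hbr := (isAcyclic_iff_forall_adj_isBridge.mp hA) hadj
    rw [isBridge_iff] at hbr
    have hnr := hbr
    set i0 := (p0 : Fin m × Fin n).1 with hi0
    set j0 := (p0 : Fin m × Fin n).2 with hj0
    set G' := bipGraph m n S \ SimpleGraph.fromEdgeSet {s(Sum.inl i0, Sum.inr j0)} with hG'
    set χ : (Fin m ⊕ Fin n) → ℝ :=
      fun x => if G'.Reachable (Sum.inl i0) x then 1 else 0 with hχ
    have hχ1 : χ (Sum.inl i0) = 1 := if_pos (Reachable.refl _)
    have hχ2 : χ (Sum.inr j0) = 0 := if_neg hnr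
    have hχeq : ∀ q : {x // x ∈ S}, (q : Fin m × Fin n) ≠ ↑p0 →
        χ (Sum.inl (q : Fin m × Fin n).1) = χ (Sum.inr (q : Fin m × Fin n).2) := by
      intro q hq
      have hadj' : G'.Adj (Sum.inl (q : Fin m × Fin n).1) (Sum.inr (q : Fin m × Fin n).2) := by
        rw [hG', SimpleGraph.sdiff_adj]
        constructor
        · exact Or.inl ⟨↑q, q.2, rfl, rfl⟩
        · rw [SimpleGraph.fromEdgeSet_adj]
          rintro ⟨h1, -⟩
          rw [Set.mem_singleton_iff, Sym2.eq_iff] at h1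
          rcases h1 with ⟨ha, hb⟩ | ⟨ha, hb⟩
          · apply hq
            apply Prod.ext
            · exact Sum.inl_injective ha
            · exact Sum.inr_injective hb
          · exact Sum.inl_ne_inr ha
      have hiff : G'.Reachable (Sum.inl i0) (Sum.inl (q : Fin m × Fin n).1)
          ↔ G'.Reachable (Sum.inl i0) (Sum.inr (q : Fin m × Fin n).2) :=
        ⟨fun h => h.trans hadj'.reachable, fun h => h.trans hadj'.symm.reachable⟩
      rw [hχ]
      simp only [hiff]
    have row : ∀ i : Fin m, ∑ p ∈ s, w p * (if i = (p : Fin m × Fin n).1 then (1:ℝ) else 0)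
        = 0 := by
      intro i
      have h1 := congrFun (congrArg Prod.fst hwv) i
      simpa [Prod.fst_sum, Finset.sum_apply, vtx, Pi.single_apply] using h1
    have col : ∀ j : Fin n, ∑ p ∈ s, w p * (if j = (p : Fin m × Fin n).2 then (1:ℝ) else 0)
        = 0 := by
      intro j
      have h1 := congrFun (congrArg Prod.snd hwv) j
      simpa [Prod.snd_sum, Finset.sum_apply, vtx, Pi.single_apply] using h1
    have hE1 : ∑ p ∈ s, w p * (χ (Sum.inl (p : Fin m × Fin n).1)
        - χ (Sum.inr (p : Fin m × Fin n).2)) = w p0 := by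
      have hterm : ∀ p ∈ s, w p * (χ (Sum.inl (p : Fin m × Fin n).1)
          - χ (Sum.inr (p : Fin m × Fin n).2)) = if p = p0 then w p else 0 := by
        intro p _
        by_cases hpp : p = p0
        · subst hpp
          rw [if_pos rfl, ← hi0, ← hj0, hχ1, hχ2]
          ring
        · rw [if_neg hpp, hχeq p (fun h => hpp (Subtype.ext h))]
          ring
      rw [Finset.sum_congr rfl hterm, Finset.sum_ite_eq' s p0 w]
      exact if_pos hp0
    have hE2 : ∑ p ∈ s, w p * (χ (Sum.inl (p : Fin m × Fin n).1)
        - χ (Sum.inr (p : Fin m × Fin n).2)) = 0 := by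
      have hsplit : ∑ p ∈ s, w p * (χ (Sum.inl (p : Fin m × Fin n).1)
          - χ (Sum.inr (p : Fin m × Fin n).2))
          = (∑ p ∈ s, w p * χ (Sum.inl (p : Fin m × Fin n).1))
            - ∑ p ∈ s, w p * χ (Sum.inr (p : Fin m × Fin n).2) := by
        rw [← Finset.sum_sub_distrib]
        exact Finset.sum_congr rfl fun p _ => by ring
      have hAz : ∑ p ∈ s, w p * χ (Sum.inl (p : Fin m × Fin n).1) = 0 := by
        have step1 : ∀ p ∈ s, w p * χ (Sum.inl (p : Fin m × Fin n).1)
            = ∑ i, (w p * (if i = (p : Fin m × Fin n).1 then (1:ℝ) else 0)) * χ (Sum.inl i) := by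
          intro p _
          rw [Finset.sum_eq_single_of_mem ((p : Fin m × Fin n).1) (Finset.mem_univ _)]
          · rw [if_pos rfl]; ring
          · intro i _ hi
            rw [if_neg hi]; ring
        rw [Finset.sum_congr rfl step1, Finset.sum_comm]
        refine Finset.sum_eq_zero fun i _ => ?_
        rw [← Finset.sum_mul, row i, zero_mul]
      have hBz : ∑ p ∈ s, w p * χ (Sum.inr (p : Fin m × Fin n).2) = 0 := by
        have step1 : ∀ p ∈ s, w p * χ (Sum.inr (p : Fin m × Fin n).2)
            = ∑ j, (w p * (if j = (p : Fin m × Fin n).2 then (1:ℝ) else 0)) * χ (Sum.inr j) := by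
          intro p _
          rw [Finset.sum_eq_single_of_mem ((p : Fin m × Fin n).2) (Finset.mem_univ _)]
          · rw [if_pos rfl]; ring
          · intro j _ hj
            rw [if_neg hj]; ring
        rw [Finset.sum_congr rfl step1, Finset.sum_comm]
        refine Finset.sum_eq_zero fun j _ => ?_
        rw [← Finset.sum_mul, col j, zero_mul]
      rw [hsplit, hAz, hBz, sub_zero]
    rw [hE1] at hE2
    exact hE2
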